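/- In the Bruhat graph of the dihedral group 𝔻_m, the number of directed paths from the identity to an element v of length l (paths in which each edge corresponds to left multiplication by a reflection raising the length by 1) equals 2^{l−1} for l ≥ 1. -/

import Mathlib

open CoxeterSystem List

namespace DihedralBruhatAux

theorem r_pow {n : ℕ} (c : ZMod n) (e : ℕ) :
    DihedralGroup.r c ^ e = DihedralGroup.r ((e : ZMod n) * c) := by
  induction e with
  | zero => simp [DihedralGroup.one_def, -DihedralGroup.r_zero]
  | succ e ih =>
    rw [pow_succ, ih, DihedralGroup.r_mul_r]
    push_cast
    ring_nf

theorem fin2_cases {a b : Fin 2} (h : a ≠ b) : (a = 0 ∧ b = 1) ∨ (a = 1 ∧ b = 0) := by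
  revert h; revert a b; decide

theorem fin2_eq {a b c : Fin 2} (h1 : a ≠ b) (h2 : c ≠ b) : a = c := by
  revert h1 h2; revert a b c; decide

section General

variable {B W : Type*} [Group W] {M : CoxeterMatrix B} (cs : CoxeterSystem M W)

theorem parity (ω : List B) :
    cs.length (cs.wordProd ω) % 2 = ω.length % 2 := by
  induction ω with
  | nil => simp
  | cons i ω ih =>
    rw [cs.wordProd_cons, cs.length_mul_mod_two, cs.length_simple]
    simp only [List.length_cons]
    omega

theorem palindrome (e : ℕ) : ∀ a b : B,
    ∃ (u : List B) (c : B), alternatingWord a b (2 * e + 1) = u ++ c :: u.reverse := by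
  induction e with
  | zero => intro a b; exact ⟨[], b, rfl⟩
  | succ e ih =>
    intro a b
    obtain ⟨u, c, hu⟩ := ih b a
    refine ⟨b :: u, c, ?_⟩
    have h1 : 2 * (e + 1) + 1 = (2 * e + 2) + 1 := by ring
    rw [h1, alternatingWord_succ, alternatingWord_succ', hu]
    simp [Nat.even_add_one, Nat.succ_mod_two_eq_zero_iff, List.concat_eq_append,
      List.reverse_cons, parity]

end General

section Fin2

variable {W : Type*} [Group W] {M : CoxeterMatrix (Fin 2)} (cs : CoxeterSystem M W)

theorem red_alt : ∀ (n : ℕ) (ω : List (Fin 2)), cs.IsReduced ω → ω.length = n →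
    ∃ a b : Fin 2, a ≠ b ∧ ω = alternatingWord a b n := by
  intro n
  induction n using Nat.strong_induction_on with
  | _ n ih =>
    match n with
    | 0 =>
      intro ω _ hlen
      rw [List.length_eq_zero_iff] at hlen
      exact ⟨0, 1, by decide, by rw [hlen]; rfl⟩
    | 1 =>
      intro ω _ hlen
      obtain ⟨j, rfl⟩ := List.length_eq_one_iff.mp hlen
      refine ⟨j + 1, j, by omega, rfl⟩
    | (n + 2) =>
      intro ω hred hlen
      match ω with
      | a :: b :: ω' =>
        have hlen' : (b :: ω').length = n + 1 := by simpa using hlen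
        have htail : cs.IsReduced (b :: ω') := by
          have := CoxeterSystem.IsReduced.drop (ω := a :: b :: ω') hred 1
          simpa using this
        have hab : a ≠ b := by
          intro h
          subst h
          have h1 : cs.wordProd (a :: a :: ω') = cs.wordProd ω' := by
            rw [cs.wordProd_cons, cs.wordProd_cons, cs.simple_mul_simple_cancel_left]
          have h2 := cs.length_wordProd_le ω'
          rw [← h1] at h2
          rw [CoxeterSystem.IsReduced, hlen] at hred
          have h3 : ω'.length = n := by simpa using hlen'
          omega
        obtain ⟨x, y, hxy, heq0⟩ := ih (n + 1) (by omega) (b :: ω') htail hlen'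
        have heq := heq0
        rw [alternatingWord_succ'] at heq
        obtain ⟨hb, hω'⟩ := List.cons_eq_cons.mp heq
        refine ⟨x, y, hxy, ?_⟩
        rw [alternatingWord_succ' x y (n + 1), ← heq0]
        have hc : a = (if Even (n + 1) then y else x) := by
          rcases Nat.even_or_odd n with he | ho
          · have h1 : ¬ Even (n + 1) := by simp [Nat.even_add_one, he]
            have hb' : b = y := by rw [if_pos he] at hb; exact hb
            rw [if_neg h1]
            exact fin2_eq hab (hb' ▸ hxy)
          · have he1 : Even (n + 1) := by simpa [Nat.even_add_one] using Nat.not_even_iff_odd.mpr ho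
            have hb' : b = x := by rw [if_neg (Nat.not_even_iff_odd.mpr ho)] at hb; exact hb
            rw [if_pos he1]
            refine fin2_eq hab ?_
            rw [hb']; exact fun h => hxy h.symm
        rw [← hc]

theorem exists_alt (w : W) :
    ∃ a b : Fin 2, a ≠ b ∧ w = cs.wordProd (alternatingWord a b (cs.length w)) := by
  obtain ⟨ω, hlen, hw⟩ := cs.exists_reduced_word w
  have hred : cs.IsReduced ω := hlen
  obtain ⟨a, b, hab, hω⟩ := red_alt cs ω.length ω hred rfl
  exact ⟨a, b, hab, by rw [hw, hlen.eq, ← hω]⟩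

end Fin2

section Dihedral

variable {W : Type*} [Group W] {m : ℕ} {M : CoxeterMatrix (Fin 2)}
  (cs : CoxeterSystem M W)

variable (hM : M.M = !![1, m; m, 1])

include hM

theorem M_ne {a b : Fin 2} (hab : a ≠ b) : M.M a b = m := by
  rcases fin2_cases hab with ⟨rfl, rfl⟩ | ⟨rfl, rfl⟩ <;> rw [hM] <;> simp

/-- the defining map to the dihedral group -/
def dihedF (m : ℕ) : Fin 2 → DihedralGroup m := fun i => DihedralGroup.sr (i.val : ZMod m)

theorem liftable' : M.IsLiftable (dihedF m) := by
  intro i i'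
  by_cases h : i = i'
  · subst h
    rw [M.diagonal i, pow_one]
    show DihedralGroup.sr _ * DihedralGroup.sr _ = 1
    rw [DihedralGroup.sr_mul_sr, sub_self, DihedralGroup.one_def]
  · have hMm : M i i' = m := M_ne hM h
    rw [hMm]
    show (DihedralGroup.sr _ * DihedralGroup.sr _) ^ m = 1
    rw [DihedralGroup.sr_mul_sr]
    rw [r_pow]
    simp [DihedralGroup.one_def, ZMod.natCast_self, -DihedralGroup.r_zero]

omit hM in
include hM in
/-- the homomorphism to the dihedral group -/
noncomputable def phi : W →* DihedralGroup m := cs.lift ⟨dihedF m, liftable' hM⟩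

theorem phi_simple (i : Fin 2) :
    phi cs hM (cs.simple i) = DihedralGroup.sr (i.val : ZMod m) :=
  cs.lift_apply_simple (liftable' hM) i

theorem phi_alt (i i' : Fin 2) (k : ℕ) :
    phi cs hM (cs.wordProd (alternatingWord i i' k)) =
      (if Even k then 1 else DihedralGroup.sr (i'.val : ZMod m)) *
        (DihedralGroup.sr (i.val : ZMod m) * DihedralGroup.sr (i'.val : ZMod m)) ^ (k / 2) := by
  rw [cs.prod_alternatingWord_eq_mul_pow, map_mul, map_pow, map_mul, apply_ite (phi cs hM),
    map_one, phi_simple, phi_simple]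

theorem phi_alt01 (k : ℕ) :
    phi cs hM (cs.wordProd (alternatingWord 0 1 k)) =
      if Even k then DihedralGroup.r ((k / 2 : ℕ) : ZMod m)
      else DihedralGroup.sr (1 + ((k / 2 : ℕ) : ZMod m)) := by
  rw [phi_alt]
  simp only [Fin.val_zero, Fin.val_one, Nat.cast_zero, Nat.cast_one,
    DihedralGroup.sr_mul_sr, sub_zero, r_pow, mul_one]
  split_ifs with h
  · rw [one_mul]
  · rw [DihedralGroup.sr_mul_r]

theorem phi_alt10 (k : ℕ) :
    phi cs hM (cs.wordProd (alternatingWord 1 0 k)) =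
      if Even k then DihedralGroup.r (-((k / 2 : ℕ) : ZMod m))
      else DihedralGroup.sr (-((k / 2 : ℕ) : ZMod m)) := by
  rw [phi_alt]
  simp only [Fin.val_zero, Fin.val_one, Nat.cast_zero, Nat.cast_one,
    DihedralGroup.sr_mul_sr, zero_sub, r_pow, mul_neg_one]
  split_ifs with h
  · rw [one_mul]
  · rw [DihedralGroup.sr_mul_r, zero_add]

end Dihedral
section Facts

variable {W : Type*} [Group W] {m : ℕ} {M : CoxeterMatrix (Fin 2)}
  (cs : CoxeterSystem M W)

theorem zmod_eq (hm : 2 ≤ m) {x y : ℕ} (hx : x < m) (hy : y < m)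
    (h : ((x : ℕ) : ZMod m) = ((y : ℕ) : ZMod m)) : x = y := by
  haveI : NeZero m := ⟨by omega⟩
  have := congrArg ZMod.val h
  rwa [ZMod.val_natCast_of_lt hx, ZMod.val_natCast_of_lt hy] at this

theorem length_alt (hm : 2 ≤ m) (hM : M.M = !![1, m; m, 1])
    {i i' : Fin 2} (hii : i ≠ i') {k : ℕ} (hk : k ≤ m) :
    cs.length (cs.wordProd (alternatingWord i i' k)) = k := by
  have hj1 : cs.length (cs.wordProd (alternatingWord i i' k)) ≤ k := by
    have := cs.length_wordProd_le (alternatingWord i i' k)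
    rwa [length_alternatingWord] at this
  have hj2 : cs.length (cs.wordProd (alternatingWord i i' k)) % 2 = k % 2 := by
    have := parity cs (alternatingWord i i' k)
    rwa [length_alternatingWord] at this
  by_contra hne
  obtain ⟨a, b, hab, hwa⟩ := exists_alt cs (cs.wordProd (alternatingWord i i' k))
  set j := cs.length (cs.wordProd (alternatingWord i i' k)) with hj
  have hj3 : j + 2 ≤ k := by omega
  have hEq := congrArg (phi cs hM) hwa
  rcases Nat.even_or_odd k with he | ho
  · have hek : k % 2 = 0 := Nat.even_iff.mp he
    have hej : Even j := Nat.even_iff.mpr (by omega)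
    rcases fin2_cases hii with ⟨rfl, rfl⟩ | ⟨rfl, rfl⟩ <;>
      rcases fin2_cases hab with ⟨rfl, rfl⟩ | ⟨rfl, rfl⟩ <;>
      simp only [phi_alt01, phi_alt10, if_pos he, if_pos hej, DihedralGroup.r.injEq] at hEq
    · have h0 : ((k / 2 : ℕ) : ZMod m) = ((j / 2 : ℕ) : ZMod m) := by
        push_cast; linear_combination hEq
      have := zmod_eq hm (by omega) (by omega) h0
      omega
    · have h0 : ((k / 2 + j / 2 : ℕ) : ZMod m) = ((0 : ℕ) : ZMod m) := by
        push_cast; linear_combination hEq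
      have := zmod_eq hm (by omega) (by omega) h0
      omega
    · have h0 : ((k / 2 + j / 2 : ℕ) : ZMod m) = ((0 : ℕ) : ZMod m) := by
        push_cast; linear_combination -hEq
      have := zmod_eq hm (by omega) (by omega) h0
      omega
    · have h0 : ((k / 2 : ℕ) : ZMod m) = ((j / 2 : ℕ) : ZMod m) := by
        push_cast; linear_combination -hEq
      have := zmod_eq hm (by omega) (by omega) h0
      omega
  · have hok : k % 2 = 1 := Nat.odd_iff.mp ho
    have hoj : ¬ Even j := by rw [Nat.even_iff]; omega
    have hek : ¬ Even k := Nat.not_even_iff_odd.mpr ho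
    rcases fin2_cases hii with ⟨rfl, rfl⟩ | ⟨rfl, rfl⟩ <;>
      rcases fin2_cases hab with ⟨rfl, rfl⟩ | ⟨rfl, rfl⟩ <;>
      simp only [phi_alt01, phi_alt10, if_neg hek, if_neg hoj, DihedralGroup.sr.injEq] at hEq
    · have h0 : ((k / 2 : ℕ) : ZMod m) = ((j / 2 : ℕ) : ZMod m) := by
        push_cast; linear_combination hEq
      have := zmod_eq hm (by omega) (by omega) h0
      omega
    · have h0 : ((1 + k / 2 + j / 2 : ℕ) : ZMod m) = ((0 : ℕ) : ZMod m) := by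
        push_cast; linear_combination hEq
      have := zmod_eq hm (by omega) (by omega) h0
      omega
    · have h0 : ((1 + k / 2 + j / 2 : ℕ) : ZMod m) = ((0 : ℕ) : ZMod m) := by
        push_cast; linear_combination -hEq
      have := zmod_eq hm (by omega) (by omega) h0
      omega
    · have h0 : ((k / 2 : ℕ) : ZMod m) = ((j / 2 : ℕ) : ZMod m) := by
        push_cast; linear_combination -hEq
      have := zmod_eq hm (by omega) (by omega) h0
      omega

end Facts
section Facts2

variable {W : Type*} [Group W] {m : ℕ} {M : CoxeterMatrix (Fin 2)}
  (cs : CoxeterSystem M W)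

theorem alt_ne (hm : 2 ≤ m) (hM : M.M = !![1, m; m, 1]) {k : ℕ} (h1 : 0 < k) (h2 : k < m) :
    cs.wordProd (alternatingWord (0 : Fin 2) 1 k) ≠ cs.wordProd (alternatingWord 1 0 k) := by
  intro h
  have hEq := congrArg (phi cs hM) h
  rcases Nat.even_or_odd k with he | ho
  · simp only [phi_alt01, phi_alt10, if_pos he, DihedralGroup.r.injEq] at hEq
    have h0 : ((k / 2 + k / 2 : ℕ) : ZMod m) = ((0 : ℕ) : ZMod m) := by
      push_cast; linear_combination hEq
    have := zmod_eq hm (by omega) (by omega) h0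
    have hk2 : k % 2 = 0 := Nat.even_iff.mp he
    omega
  · have hek : ¬ Even k := Nat.not_even_iff_odd.mpr ho
    simp only [phi_alt01, phi_alt10, if_neg hek, DihedralGroup.sr.injEq] at hEq
    have h0 : ((1 + k / 2 + k / 2 : ℕ) : ZMod m) = ((0 : ℕ) : ZMod m) := by
      push_cast; linear_combination hEq
    have hk2 : k % 2 = 1 := Nat.odd_iff.mp ho
    have := zmod_eq hm (by omega) (by omega) h0
    omega

theorem length_le (hm : 2 ≤ m) (hM : M.M = !![1, m; m, 1]) (w : W) : cs.length w ≤ m := by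
  by_contra h
  obtain ⟨a, b, hab, hwa⟩ := exists_alt cs w
  have hred : cs.IsReduced (alternatingWord a b (cs.length w)) := by
    rw [CoxeterSystem.IsReduced, length_alternatingWord, ← hwa]
  exact cs.not_isReduced_alternatingWord a b
    (by rw [show M a b = m from M_ne hM hab]; omega)
    (by rw [show M a b = m from M_ne hM hab]; omega) hred

theorem refl_of_odd {t : W} (h : Odd (cs.length t)) : cs.IsReflection t := by
  obtain ⟨a, b, hab, hta⟩ := exists_alt cs t
  obtain ⟨e, he⟩ := h
  rw [he] at hta
  obtain ⟨u, c, hu⟩ := palindrome e a b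
  rw [hu, cs.wordProd_append, cs.wordProd_cons, cs.wordProd_reverse] at hta
  exact ⟨cs.wordProd u, c, by rw [hta, mul_assoc]⟩

include cs in
theorem finiteW (hm : 2 ≤ m) (hM : M.M = !![1, m; m, 1]) : Finite W := by
  have hsurj : Function.Surjective (fun p : Fin (m + 1) × Fin 2 × Fin 2 =>
      cs.wordProd (alternatingWord p.2.1 p.2.2 p.1.val)) := by
    intro w
    obtain ⟨a, b, hab, hwa⟩ := exists_alt cs w
    exact ⟨(⟨cs.length w, by have := length_le cs hm hM w; omega⟩, a, b), hwa.symm⟩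
  exact Finite.of_surjective _ hsurj

theorem dichotomy (hm : 2 ≤ m) (hM : M.M = !![1, m; m, 1]) {u : W} {k : ℕ}
    (hu : cs.length u = k) :
    u = cs.wordProd (alternatingWord (0 : Fin 2) 1 k) ∨
      u = cs.wordProd (alternatingWord (1 : Fin 2) 0 k) := by
  obtain ⟨a, b, hab, hwa⟩ := exists_alt cs u
  rw [hu] at hwa
  rcases fin2_cases hab with ⟨rfl, rfl⟩ | ⟨rfl, rfl⟩
  · exact Or.inl hwa
  · exact Or.inr hwa

end Facts2
section Main

variable {W : Type*} [Group W] {m : ℕ} {M : CoxeterMatrix (Fin 2)}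
  (cs : CoxeterSystem M W)

theorem finite_subtype_lists {α : Type*} [Finite α] (l : ℕ) (Q : List α → Prop) :
    Finite {p : List α // p.length = l ∧ Q p} := by
  have hinj : Function.Injective (fun p : {p : List α // p.length = l ∧ Q p} =>
      (fun i : Fin l => p.val.get (Fin.cast p.prop.1.symm i))) := by
    intro p q h
    apply Subtype.ext
    apply List.ext_get (by rw [p.prop.1, q.prop.1])
    intro n h1 h2
    have hn : n < l := by rw [← p.prop.1]; exact h1
    have := congrFun h ⟨n, hn⟩
    simpa using this
  exact Finite.of_injective _ hinj

theorem count (hm : 2 ≤ m) (hM : M.M = !![1, m; m, 1]) :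
    ∀ (l : ℕ), 1 ≤ l → ∀ v : W, cs.length v = l →
    Nat.card {p : List W //
      p.length = l ∧
      (∀ t ∈ p, cs.IsReflection t) ∧
      (∀ k ≤ l, cs.length ((p.take k).foldl (fun w t => t * w) 1) = k) ∧
      p.foldl (fun w t => t * w) 1 = v} = 2 ^ (l - 1) := by
  classical
  haveI : Finite W := finiteW cs hm hM
  have foldA : ∀ (q : List W) (t : W),
      (q ++ [t]).foldl (fun w t => t * w) 1 = t * q.foldl (fun w t => t * w) 1 := by
    intro q t; rw [List.foldl_append]; rfl
  intro l
  induction l with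
  | zero => omega
  | succ l ih =>
    intro _ v hv
    by_cases hl1 : l = 0
    · -- base case : l + 1 = 1
      subst hl1
      have h20 : (2 : ℕ) ^ (0 + 1 - 1) = 1 := rfl
      rw [h20, Nat.card_eq_one_iff_unique]
      constructor
      · constructor
        intro p q
        obtain ⟨a, hap⟩ := List.length_eq_one_iff.mp p.prop.1
        obtain ⟨b, hbq⟩ := List.length_eq_one_iff.mp q.prop.1
        have ha : a = v := by
          have := p.prop.2.2.2
          rw [hap] at this
          simpa using this
        have hb : b = v := by
          have := q.prop.2.2.2
          rw [hbq] at this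
          simpa using this
        exact Subtype.ext (by rw [hap, hbq, ha, hb])
      · refine ⟨⟨[v], rfl, ?_, ?_, by simp⟩⟩
        · intro t ht
          have : t = v := by simpa using ht
          subst this
          obtain ⟨i, hi⟩ := cs.length_eq_one_iff.mp hv
          exact hi ▸ cs.isReflection_simple i
        · intro k hk
          interval_cases k
          · simp
          · simpa using hv
    · -- inductive step
      have hl' : 1 ≤ l := by omega
      have hlm : l + 1 ≤ m := hv ▸ length_le cs hm hM v
      set A := cs.wordProd (alternatingWord (0 : Fin 2) 1 l) with hAdef
      set B := cs.wordProd (alternatingWord (1 : Fin 2) 0 l) with hBdef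
      have hA : cs.length A = l := length_alt cs hm hM (by decide) (by omega)
      have hB : cs.length B = l := length_alt cs hm hM (by decide) (by omega)
      have hAB : A ≠ B := alt_ne cs hm hM (by omega) (by omega)
      -- abbreviation for the path condition
      set Cond : ℕ → W → List W → Prop := fun n u p =>
        p.length = n ∧ (∀ t ∈ p, cs.IsReflection t) ∧
        (∀ k ≤ n, cs.length ((p.take k).foldl (fun w t => t * w) 1) = k) ∧
        p.foldl (fun w t => t * w) 1 = u with hCond
      have take_mem : ∀ p : List W, Cond (l + 1) v p →
          Cond l ((p.take l).foldl (fun w t => t * w) 1) (p.take l) := by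
        rintro p ⟨h1, h2, h3, h4⟩
        refine ⟨?_, ?_, ?_, rfl⟩
        · rw [List.length_take, h1]; omega
        · exact fun t ht => h2 t (List.take_subset l p ht)
        · intro k hk
          rw [List.take_take, min_eq_left hk]
          exact h3 k (by omega)
      have fold_take : ∀ p : List W, Cond (l + 1) v p →
          (p.take l).foldl (fun w t => t * w) 1 = A ∨
            (p.take l).foldl (fun w t => t * w) 1 = B := by
        intro p hp
        exact dichotomy cs hm hM (hp.2.2.1 l (by omega))
      have app_mem : ∀ (u : W), cs.length u = l → ∀ q : List W, Cond l u q →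
          Cond (l + 1) v (q ++ [v * u⁻¹]) := by
        rintro u hu q ⟨h1, h2, h3, h4⟩
        refine ⟨by simp [h1], ?_, ?_, ?_⟩
        · intro t ht
          rcases List.mem_append.mp ht with h | h
          · exact h2 t h
          · have ht' : t = v * u⁻¹ := by simpa using h
            subst ht'
            apply refl_of_odd cs
            rw [Nat.odd_iff, cs.length_mul_mod_two, cs.length_inv, hv, hu]
            omega
        · intro k hk
          rcases Nat.lt_or_ge k (l + 1) with h | h
          · rw [List.take_append_of_le_length (by omega : k ≤ q.length)]
            exact h3 k (by omega)
          · have hk1 : k = l + 1 := by omega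
            subst hk1
            rw [List.take_of_length_le (by simp [h1]), foldA, h4, inv_mul_cancel_right]
            exact hv
        · rw [foldA, h4, inv_mul_cancel_right]
      have keyp : ∀ p : List W, Cond (l + 1) v p →
          p = p.take l ++ [v * ((p.take l).foldl (fun w t => t * w) 1)⁻¹] := by
        rintro p ⟨h1, h2, h3, h4⟩
        have hne : p ≠ [] := by intro h; rw [h] at h1; simp at h1
        have hdl : p.take l = p.dropLast := by
          rw [List.dropLast_eq_take, h1]
          rfl
        have h5 : p.foldl (fun w t => t * w) 1 =
            p.getLast hne * (p.dropLast.foldl (fun w t => t * w) 1) := by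
          conv_lhs => rw [← List.dropLast_append_getLast hne]
          rw [foldA]
        conv_lhs => rw [← List.dropLast_append_getLast hne]
        rw [hdl]
        congr 1
        rw [← h4, h5, mul_assoc, mul_inv_cancel, mul_one]
      -- the bijection
      set f : {p : List W // Cond (l + 1) v p} →
          ({q : List W // Cond l A q} ⊕ {q : List W // Cond l B q}) := fun p =>
        if h : (p.val.take l).foldl (fun w t => t * w) 1 = A
          then Sum.inl ⟨p.val.take l, by rw [← h]; exact take_mem p.val p.prop⟩
          else Sum.inr ⟨p.val.take l, by
            rcases fold_take p.val p.prop with hd | hd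
            · exact absurd hd h
            · rw [← hd]; exact take_mem p.val p.prop⟩ with hf
      have hinj : Function.Injective f := by
        intro p p' hpp
        simp only [hf] at hpp
        apply Subtype.ext
        by_cases h : (p.val.take l).foldl (fun w t => t * w) 1 = A <;>
          by_cases h' : (p'.val.take l).foldl (fun w t => t * w) 1 = A
        · rw [dif_pos h, dif_pos h'] at hpp
          have ht : p.val.take l = p'.val.take l := by
            simpa using hpp
          rw [keyp p.val p.prop, keyp p'.val p'.prop, h, h', ht]
        · rw [dif_pos h, dif_neg h'] at hpp
          exact absurd hpp (by simp)
        · rw [dif_neg h, dif_pos h'] at hpp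
          exact absurd hpp (by simp)
        · rw [dif_neg h, dif_neg h'] at hpp
          have ht : p.val.take l = p'.val.take l := by
            simpa using hpp
          have hfB : (p.val.take l).foldl (fun w t => t * w) 1 = B :=
            (fold_take p.val p.prop).resolve_left h
          have hfB' : (p'.val.take l).foldl (fun w t => t * w) 1 = B :=
            (fold_take p'.val p'.prop).resolve_left h'
          rw [keyp p.val p.prop, keyp p'.val p'.prop, hfB, hfB', ht]
      have hsurj : Function.Surjective f := by
        rintro (q | q)
        · refine ⟨⟨q.val ++ [v * A⁻¹], app_mem A hA q.val q.prop⟩, ?_⟩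
          simp only [hf]
          have hc : (q.val ++ [v * A⁻¹]).take l = q.val := List.take_left' q.prop.1
          simp only [hc]
          rw [dif_pos q.prop.2.2.2]
        · refine ⟨⟨q.val ++ [v * B⁻¹], app_mem B hB q.val q.prop⟩, ?_⟩
          simp only [hf]
          have hc : (q.val ++ [v * B⁻¹]).take l = q.val := List.take_left' q.prop.1
          simp only [hc]
          rw [dif_neg (by rw [q.prop.2.2.2]; exact fun h => hAB h.symm)]
      haveI : Finite {q : List W // Cond l A q} := by
        rw [hCond]; exact finite_subtype_lists l _
      haveI : Finite {q : List W // Cond l B q} := by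
        rw [hCond]; exact finite_subtype_lists l _
      have hcard : Nat.card {p : List W // Cond (l + 1) v p} =
          Nat.card {q : List W // Cond l A q} + Nat.card {q : List W // Cond l B q} := by
        rw [Nat.card_congr (Equiv.ofBijective f ⟨hinj, hsurj⟩)]
        exact Nat.card_sum
      have cardA : Nat.card {q : List W // Cond l A q} = 2 ^ (l - 1) := ih hl' A hA
      have cardB : Nat.card {q : List W // Cond l B q} = 2 ^ (l - 1) := ih hl' B hB
      have : Nat.card {p : List W // Cond (l + 1) v p} = 2 ^ l := by
        rw [hcard, cardA, cardB]
        have h2 : 2 ^ l = 2 ^ (l - 1) * 2 := by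
          rw [← pow_succ, Nat.sub_add_cancel hl']
        omega
      simpa using this

end Main
end DihedralBruhatAux

/-- In the Bruhat graph of the dihedral group `𝔻_m` of type
`I₂(m)` (vertex set `𝔻_m`, a directed edge `w → t * w` for each reflection `t`
with `ℓ(t * w) = ℓ(w) + 1`), the number of directed paths from the identity to an
element `v` of length `l ≥ 1` equals `2^(l−1)`.  A path is recorded as the list
`p = [t₁, …, t_l]` of reflections applied on the left, so the `k`-th intermediate
vertex is `t_k ⋯ t₁` and must have length `k`. -/
theorem dihedral_bruhat_path_count
    {W : Type*} [Group W] (m : ℕ) (hm : 2 ≤ m)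
    (M : CoxeterMatrix (Fin 2)) (hM : M.M = !![1, m; m, 1])
    (cs : CoxeterSystem M W)
    (v : W) (l : ℕ) (hl : 1 ≤ l) (hv : cs.length v = l) :
    Nat.card {p : List W //
      p.length = l ∧
      (∀ t ∈ p, cs.IsReflection t) ∧
      (∀ k ≤ l, cs.length ((p.take k).foldl (fun w t => t * w) 1) = k) ∧
      p.foldl (fun w t => t * w) 1 = v} = 2 ^ (l - 1) :=
  DihedralBruhatAux.count cs hm hM l hl v hv
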